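/- Let Z, Z⁽¹⁾, …, Z⁽ᵏ⁾ be independent and identically distributed real-valued random variables on a probability space (Ω, 𝓕, P), and let δ ∈ (0,1). Set p := ⌈(k+1)(1-δ)⌉ and assume p ≤ k. Let Z₍p₎ denote the p-th smallest value among Z⁽¹⁾, …, Z⁽ᵏ⁾ (the p-th order statistic). Then P(Z ≤ Z₍p₎) ≥ 1 - δ. -/

import Mathlib

open MeasureTheory ProbabilityTheory
open scoped ENNReal

/-- The `p`-th smallest value (1-indexed `p`-th order statistic) among the
values `v 0, …, v (k-1)`. -/
noncomputable def orderStat {k : ℕ} (v : Fin k → ℝ) (p : ℕ) : ℝ :=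
  ((Multiset.map v Finset.univ.val).sort (· ≤ ·)).getD (p - 1) 0

section helpers

lemma countP_le_of_sorted (l : List ℝ) (hl : l.Pairwise (· ≤ ·)) (q : ℕ) (hq : q < l.length)
    (pr : ℝ → Bool) (h : ∀ y, l.get ⟨q, hq⟩ ≤ y → pr y = false) :
    l.countP pr ≤ q := by
  have hdrop : (l.drop q).countP pr = 0 := by
    rw [List.countP_eq_zero]
    intro x hx
    rw [List.mem_iff_getElem] at hx
    obtain ⟨i, hi, rfl⟩ := hx
    rw [List.getElem_drop]
    have h2 : q + i < l.length := by simp at hi; omega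
    have : l.get ⟨q, hq⟩ ≤ l.get ⟨q + i, h2⟩ := hl.rel_get_of_le (by simp [Fin.le_def])
    simp only [List.get_eq_getElem] at this
    simp [h _ this]
  calc l.countP pr = (l.take q).countP pr + (l.drop q).countP pr := by
        rw [← List.countP_append, List.take_append_drop]
    _ ≤ q := by rw [hdrop]; simpa using (List.countP_le_length (p := pr)).trans (by simp)

lemma le_countP_of_sorted (l : List ℝ) (hl : l.Pairwise (· ≤ ·)) (q : ℕ) (hq : q < l.length)
    (pr : ℝ → Bool) (h : ∀ y, y ≤ l.get ⟨q, hq⟩ → pr y = true) :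
    q + 1 ≤ l.countP pr := by
  have htake : (l.take (q + 1)).countP pr = q + 1 := by
    rw [List.countP_eq_length.2, List.length_take, min_eq_left (by omega)]
    intro x hx
    rw [List.mem_iff_getElem] at hx
    obtain ⟨i, hi, rfl⟩ := hx
    have hi' : i < l.length := by simp at hi; omega
    rw [List.getElem_take]
    have hile : i ≤ q := by simp at hi; omega
    have : l.get ⟨i, hi'⟩ ≤ l.get ⟨q, hq⟩ := hl.rel_get_of_le (by simp [Fin.le_def, hile])
    simp only [List.get_eq_getElem] at this
    exact h _ this
  calc q + 1 = (l.take (q+1)).countP pr := htake.symm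
    _ ≤ l.countP pr := by
        conv_rhs => rw [← List.take_append_drop (q+1) l]
        rw [List.countP_append]; omega

lemma card_filter_eq_countP {n : ℕ} (v : Fin n → ℝ) (pred : ℝ → Prop) [DecidablePred pred] :
    (Finset.univ.filter fun i => pred (v i)).card
      = (Multiset.sort (Multiset.map v Finset.univ.val) (· ≤ ·)).countP (fun y => decide (pred y)) := by
  have h1 : ((Multiset.sort (Multiset.map v Finset.univ.val) (· ≤ ·) : Multiset ℝ)).countP pred
      = (Multiset.sort (Multiset.map v Finset.univ.val) (· ≤ ·)).countP (fun y => decide (pred y)) :=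
    Multiset.coe_countP _ _
  rw [← h1, Multiset.sort_eq, Multiset.countP_map]
  rfl

lemma length_sort_map {n : ℕ} (v : Fin n → ℝ) :
    (Multiset.sort (Multiset.map v Finset.univ.val) (· ≤ ·)).length = n := by
  rw [Multiset.length_sort, Multiset.card_map]
  simp

lemma le_orderStat_of_rank_lt {k p : ℕ} (hp1 : 1 ≤ p) (hpk : p ≤ k) (u : Fin k → ℝ) (x : ℝ)
    (h : (Finset.univ.filter fun i => u i < x).card < p) : x ≤ orderStat u p := by
  by_contra hcon
  push_neg at hcon
  set l := Multiset.sort (Multiset.map u Finset.univ.val) (· ≤ ·) with hl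
  have hlen : l.length = k := length_sort_map u
  have hsorted : l.Pairwise (· ≤ ·) := Multiset.pairwise_sort _ _
  have hq : p - 1 < l.length := by omega
  have hget : orderStat u p = l.get ⟨p - 1, hq⟩ := by
    rw [orderStat, ← hl]; simp [hq]
  have := le_countP_of_sorted l hsorted (p - 1) hq (fun y => decide (y < x))
    (fun y hy => by simp; exact lt_of_le_of_lt hy (hget ▸ hcon))
  rw [← card_filter_eq_countP u (fun y => y < x)] at this
  omega

lemma card_rank_ge_le {n p : ℕ} (hp1 : 1 ≤ p) (hpn : p ≤ n) (v : Fin n → ℝ) :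
    (Finset.univ.filter fun j => p ≤ (Finset.univ.filter fun i => v i < v j).card).card ≤ n - p := by
  set l := Multiset.sort (Multiset.map v Finset.univ.val) (· ≤ ·) with hl
  have hlen : l.length = n := length_sort_map v
  have hsorted : l.Pairwise (· ≤ ·) := Multiset.pairwise_sort _ _
  have hq : p - 1 < l.length := by omega
  set t := l.get ⟨p - 1, hq⟩ with ht
  have claim1 : ∀ j, p ≤ (Finset.univ.filter fun i => v i < v j).card → t < v j := by
    intro j hj
    by_contra hcon
    push_neg at hcon
    have hsub : (Finset.univ.filter fun i => v i < v j) ⊆ (Finset.univ.filter fun i => v i < t) := by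
      intro i hi
      simp only [Finset.mem_filter, Finset.mem_univ, true_and] at *
      exact lt_of_lt_of_le hi hcon
    have h1 := Finset.card_le_card hsub
    have h2 : (Finset.univ.filter fun i => v i < t).card ≤ p - 1 := by
      rw [card_filter_eq_countP v (fun y => y < t), ← hl]
      exact countP_le_of_sorted l hsorted (p-1) hq _ (fun y hy => by simp; exact hy)
    omega
  have hsub2 : (Finset.univ.filter fun j => p ≤ (Finset.univ.filter fun i => v i < v j).card)
      ⊆ (Finset.univ.filter fun j => ¬ (v j ≤ t)) := by
    intro j hj
    simp only [Finset.mem_filter, Finset.mem_univ, true_and] at *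
    exact not_le.2 (claim1 j hj)
  have hcard2 : p ≤ (Finset.univ.filter fun j : Fin n => v j ≤ t).card := by
    rw [card_filter_eq_countP v (fun y => y ≤ t), ← hl]
    have := le_countP_of_sorted l hsorted (p-1) hq (fun y => decide (y ≤ t))
      (fun y hy => by simpa [ht] using hy)
    omega
  have := Finset.card_filter_add_card_filter_not (s := Finset.univ)
    (p := fun j : Fin n => v j ≤ t)
  have hfin := Finset.card_le_card hsub2
  simp only [Finset.card_univ, Fintype.card_fin] at this
  omega

lemma joint_law_pi {Ω : Type*} [MeasurableSpace Ω] (P : Measure Ω) [IsProbabilityMeasure P]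
    {n : ℕ} (W : Fin n → Ω → ℝ) (hmeas : ∀ i, Measurable (W i))
    (hindep : iIndepFun W P)
    (μ : Measure ℝ) (hμ : ∀ i, Measure.map (W i) P = μ) [SigmaFinite μ] :
    Measure.map (fun ω i => W i ω) P = Measure.pi (fun _ => μ) := by
  have hJ : Measurable (fun ω i => W i ω) := measurable_pi_lambda _ hmeas
  refine (Measure.pi_eq fun s hs => ?_).symm
  rw [Measure.map_apply hJ (MeasurableSet.univ_pi hs)]
  have hpre : (fun ω i => W i ω) ⁻¹' Set.pi Set.univ s = ⋂ i ∈ Finset.univ, W i ⁻¹' s i := by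
    ext ω; simp [Set.mem_pi]
  rw [hpre, hindep.measure_inter_preimage_eq_mul Finset.univ (fun i _ => hs i)]
  exact Finset.prod_congr rfl fun i _ => by
    rw [← hμ i, Measure.map_apply (hmeas i) (hs i)]

lemma pi_perm_invariant {n : ℕ} (μ : Measure ℝ) [IsProbabilityMeasure μ]
    (e : Equiv.Perm (Fin n)) :
    Measure.map (fun (g : Fin n → ℝ) => g ∘ e) (Measure.pi (fun _ => μ)) = Measure.pi (fun _ => μ) := by
  have hT : Measurable (fun (g : Fin n → ℝ) => g ∘ e) :=
    measurable_pi_lambda _ (fun i => measurable_pi_apply (e i))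
  refine (Measure.pi_eq fun s hs => ?_).symm
  rw [Measure.map_apply hT (MeasurableSet.univ_pi hs)]
  have hpre : (fun (g : Fin n → ℝ) => g ∘ e) ⁻¹' Set.pi Set.univ s
      = Set.pi Set.univ (fun j => s (e.symm j)) := by
    ext g
    simp only [Set.mem_preimage, Set.mem_pi, Set.mem_univ, true_implies, Function.comp]
    exact ⟨fun h j => by simpa using h (e.symm j), fun h i => by simpa using h (e i)⟩
  rw [hpre, Measure.pi_pi]
  exact Fintype.prod_equiv e.symm _ _ fun j => rfl

lemma card_filter_comp_equiv {n : ℕ} (e : Equiv.Perm (Fin n)) (Q : Fin n → Prop) [DecidablePred Q] :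
    (Finset.univ.filter fun i => Q (e i)).card = (Finset.univ.filter Q).card := by
  apply Finset.card_bij' (fun i _ => e i) (fun j _ => e.symm j) <;>
    simp [Finset.mem_filter]

end helpers

theorem conformal_prediction_bound
    {Ω : Type*} [MeasurableSpace Ω] (P : Measure Ω) [IsProbabilityMeasure P]
    (k : ℕ) (W : Fin (k + 1) → Ω → ℝ)
    (hmeas : ∀ i, Measurable (W i))
    (hindep : iIndepFun W P)
    (hident : ∀ i j, Measure.map (W i) P = Measure.map (W j) P)
    (Z : Ω → ℝ) (hZ : Z = W (Fin.last k))
    (Zs : Fin k → Ω → ℝ) (hZs : ∀ i : Fin k, Zs i = W i.castSucc)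
    (δ : ℝ) (hδ : δ ∈ Set.Ioo (0 : ℝ) 1)
    (p : ℕ) (hp : p = ⌈(k + 1 : ℝ) * (1 - δ)⌉₊) (hpk : p ≤ k) :
    1 - δ ≤ (P {ω | Z ω ≤ orderStat (fun i => Zs i ω) p}).toReal := by
  obtain ⟨hδ0, hδ1⟩ := hδ
  have hp1 : 1 ≤ p := by
    rw [hp, Nat.one_le_iff_ne_zero, ← Nat.pos_iff_ne_zero, Nat.ceil_pos]
    exact mul_pos (by positivity) (by linarith)
  set μ := Measure.map (W 0) P with hμdef
  have hμprob : IsProbabilityMeasure μ := Measure.isProbabilityMeasure_map (hmeas 0).aemeasurable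
  have hμ : ∀ i, Measure.map (W i) P = μ := fun i => hident i 0
  set J : Ω → (Fin (k + 1) → ℝ) := fun ω i => W i ω with hJdef
  have hJmeas : Measurable J := measurable_pi_lambda _ hmeas
  have hmap : Measure.map J P = Measure.pi (fun _ => μ) := joint_law_pi P W hmeas hindep μ hμ
  set π : Measure (Fin (k + 1) → ℝ) := Measure.pi (fun _ => μ) with hπdef
  have hπprob : IsProbabilityMeasure π := by rw [hπdef]; infer_instance
  set R : (Fin (k + 1) → ℝ) → Fin (k + 1) → ℕ :=
    fun v j => (Finset.univ.filter fun i => v i < v j).card with hRdef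
  have hRmeas : ∀ j, Measurable (fun v => R v j) := by
    intro j
    have : (fun v => R v j) = fun v => ∑ i : Fin (k + 1), if v i < v j then 1 else 0 := by
      funext v; rw [hRdef]; exact Finset.card_filter _ _
    rw [this]
    exact Finset.measurable_sum _ fun i _ =>
      Measurable.ite (measurableSet_lt (measurable_pi_apply i) (measurable_pi_apply j))
        measurable_const measurable_const
  set S : Fin (k + 1) → Set (Fin (k + 1) → ℝ) := fun j => {v | p ≤ R v j} with hSdef
  have hSmeas : ∀ j, MeasurableSet (S j) := fun j => (hRmeas j) measurableSet_Ici
  -- exchangeability : all S j have equal measure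
  have hSeq : ∀ j, π (S j) = π (S (Fin.last k)) := by
    intro j
    set e : Equiv.Perm (Fin (k + 1)) := Equiv.swap j (Fin.last k) with hedef
    have hT : Measurable (fun (g : Fin (k + 1) → ℝ) => g ∘ e) :=
      measurable_pi_lambda _ (fun i => measurable_pi_apply (e i))
    have hpre : (fun (g : Fin (k + 1) → ℝ) => g ∘ e) ⁻¹' (S (Fin.last k)) = S j := by
      ext g
      simp only [Set.mem_preimage, hSdef, Set.mem_setOf_eq]
      have hR : R (g ∘ e) (Fin.last k) = R g j := by
        rw [hRdef]
        simp only [Function.comp]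
        have helast : ∀ i : Fin (k + 1), (g (e i) < g (e (Fin.last k))) = (g (e i) < g j) := by
          intro i; rw [hedef, Equiv.swap_apply_right]
        calc (Finset.univ.filter fun i => g (e i) < g (e (Fin.last k))).card
            = (Finset.univ.filter fun i => g (e i) < g j).card := by
              congr 1; apply Finset.filter_congr; intro i _
              rw [hedef, Equiv.swap_apply_right]
          _ = (Finset.univ.filter fun i => g i < g j).card :=
              card_filter_comp_equiv e (fun i => g i < g j)
      rw [hR]
    calc π (S j) = π ((fun (g : Fin (k + 1) → ℝ) => g ∘ e) ⁻¹' (S (Fin.last k))) := by rw [hpre]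
      _ = (Measure.map (fun (g : Fin (k + 1) → ℝ) => g ∘ e) π) (S (Fin.last k)) :=
          (Measure.map_apply hT (hSmeas (Fin.last k))).symm
      _ = π (S (Fin.last k)) := by rw [hπdef, pi_perm_invariant]
  -- sum bound via integral of sum of indicators
  have hsum : ∑ j : Fin (k + 1), π (S j) ≤ ((k + 1 - p : ℕ) : ℝ≥0∞) := by
    have h1 : ∑ j : Fin (k + 1), π (S j)
        = ∫⁻ v, ∑ j : Fin (k + 1), (S j).indicator (fun _ => (1 : ℝ≥0∞)) v ∂π := by
      rw [lintegral_finset_sum _ (fun j _ => (measurable_const.indicator (hSmeas j)))]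
      refine Finset.sum_congr rfl fun j _ => ?_
      rw [lintegral_indicator (hSmeas j)]
      simp
    rw [h1]
    have h2 : ∀ v, ∑ j : Fin (k + 1), (S j).indicator (fun _ => (1 : ℝ≥0∞)) v
        ≤ ((k + 1 - p : ℕ) : ℝ≥0∞) := by
      intro v
      have hcf : ∑ j : Fin (k + 1), (S j).indicator (fun _ => (1 : ℝ≥0∞)) v
          = ((Finset.univ.filter fun j => v ∈ S j).card : ℝ≥0∞) := by
        rw [Finset.card_filter]
        push_cast
        refine Finset.sum_congr rfl fun j _ => ?_
        by_cases hv : v ∈ S j <;> simp [Set.indicator, hv]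
      rw [hcf]
      have hcb : (Finset.univ.filter fun j => v ∈ S j).card ≤ k + 1 - p := by
        have := card_rank_ge_le (n := k + 1) hp1 (by omega) v
        simpa [hSdef, hRdef, Set.mem_setOf_eq] using this
      exact_mod_cast hcb
    calc ∫⁻ v, ∑ j : Fin (k + 1), (S j).indicator (fun _ => (1 : ℝ≥0∞)) v ∂π
        ≤ ∫⁻ v, ((k + 1 - p : ℕ) : ℝ≥0∞) ∂π := lintegral_mono h2
      _ = ((k + 1 - p : ℕ) : ℝ≥0∞) := by simp
  have hconst : ∑ j : Fin (k + 1), π (S j) = (k + 1 : ℕ) * π (S (Fin.last k)) := by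
    rw [Finset.sum_congr rfl fun j _ => hSeq j]
    simp [mul_comm]
  rw [hconst] at hsum
  -- translate to P
  have hPA : P (J ⁻¹' S (Fin.last k)) = π (S (Fin.last k)) := by
    rw [← hmap, Measure.map_apply hJmeas (hSmeas (Fin.last k))]
  -- event inclusion
  have hincl : (J ⁻¹' S (Fin.last k))ᶜ ⊆ {ω | Z ω ≤ orderStat (fun i => Zs i ω) p} := by
    intro ω hω
    simp only [Set.mem_compl_iff, Set.mem_preimage, hSdef, Set.mem_setOf_eq, not_le] at hω
    have hcardeq : (Finset.univ.filter fun i : Fin k => Zs i ω < Z ω).card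
        = R (J ω) (Fin.last k) := by
      simp only [hRdef, Finset.card_filter, Fin.sum_univ_castSucc]
      have hlast : ¬ (J ω (Fin.last k) < J ω (Fin.last k)) := lt_irrefl _
      rw [if_neg hlast, add_zero]
      refine Finset.sum_congr rfl fun i _ => ?_
      simp [hZs i, hZ, hJdef]
    exact le_orderStat_of_rank_lt hp1 hpk _ _ (by rw [hcardeq]; exact hω)
  -- final arithmetic
  have hcompl : P ((J ⁻¹' S (Fin.last k))ᶜ) = 1 - P (J ⁻¹' S (Fin.last k)) :=
    prob_compl_eq_one_sub (hJmeas (hSmeas (Fin.last k)))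
  have hmono : P ((J ⁻¹' S (Fin.last k))ᶜ) ≤ P {ω | Z ω ≤ orderStat (fun i => Zs i ω) p} :=
    measure_mono hincl
  have ha1 : P (J ⁻¹' S (Fin.last k)) ≤ 1 := prob_le_one
  have hsumR : ((k : ℝ) + 1) * (P (J ⁻¹' S (Fin.last k))).toReal ≤ (k : ℝ) + 1 - p := by
    have h := ENNReal.toReal_mono (by simp) hsum
    rw [ENNReal.toReal_mul, ENNReal.toReal_natCast, ENNReal.toReal_natCast] at h
    rw [hPA]
    push_cast [Nat.cast_sub (by omega : p ≤ k + 1)] at h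
    linarith [h]
  have hδp : ((k : ℝ) + 1) * (1 - δ) ≤ p := by
    rw [hp]; exact Nat.le_ceil _
  have hnpos : (0 : ℝ) < (k : ℝ) + 1 := by positivity
  have hgoal1 : 1 - δ ≤ 1 - (P (J ⁻¹' S (Fin.last k))).toReal := by
    have h3 : (P (J ⁻¹' S (Fin.last k))).toReal ≤ ((k : ℝ) + 1 - p) / ((k : ℝ) + 1) := by
      rw [le_div_iff₀ hnpos]; nlinarith [hsumR]
    have h4 : (1 : ℝ) - δ ≤ (p : ℝ) / ((k : ℝ) + 1) := by
      rw [le_div_iff₀ hnpos]; nlinarith [hδp]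
    have h5 : ((k : ℝ) + 1 - p) / ((k : ℝ) + 1) = 1 - (p : ℝ) / ((k : ℝ) + 1) := by
      field_simp
    linarith [h3, h4, h5.le, h5.ge]
  calc (1 : ℝ) - δ ≤ 1 - (P (J ⁻¹' S (Fin.last k))).toReal := hgoal1
    _ = (P ((J ⁻¹' S (Fin.last k))ᶜ)).toReal := by
        rw [hcompl, ENNReal.toReal_sub_of_le ha1 (by simp)]
        simp
    _ ≤ (P {ω | Z ω ≤ orderStat (fun i => Zs i ω) p}).toReal :=
        ENNReal.toReal_mono (measure_ne_top _ _) hmono
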